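/- In H_n ⊗_ℤ R, the elements h_i(c) = 1 + (1−c)s_i satisfy the Yang–Baxter identities: (a) h_i(c) h_j(d) = h_j(d) h_i(c) whenever |i−j| ≥ 2; (b) h_i(c) h_i(d) = h_i(cd); (c) h_i(c) h_{i+1}(cd) h_i(d) = h_{i+1}(d) h_i(cd) h_{i+1}(c), for all c, d ∈ R and all valid indices 1 ≤ i, j ≤ n−1. -/
import Mathlib


set_option maxHeartbeats 1000000
set_option synthInstance.maxHeartbeats 400000

open MvPolynomial

/-- The simple transposition `s_{i+1}` (1-based) of `Fin n`, for `i : Fin (n-1)` (0-based). -/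
def sPerm {n : ℕ} (i : Fin (n - 1)) : Equiv.Perm (Fin n) :=
  Equiv.swap ⟨i.val, by have := i.isLt; omega⟩ ⟨i.val + 1, by have := i.isLt; omega⟩

/-- The simple transposition `s_i` of `Fin n` for a 1-based index `i : ℕ`;
junk value `1` out of range. -/
def sPermN {n : ℕ} (i : ℕ) : Equiv.Perm (Fin n) :=
  if h : 1 ≤ i ∧ i ≤ n - 1 then sPerm ⟨i - 1, by omega⟩ else 1

/-- The product of the simple transpositions corresponding to a word. -/
def wordProd {n : ℕ} (l : List (Fin (n - 1))) : Equiv.Perm (Fin n) :=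
  (l.map sPerm).prod

/-- The Coxeter length of a permutation: the minimal length of a word in the
simple transpositions expressing it. -/
noncomputable def len {n : ℕ} (w : Equiv.Perm (Fin n)) : ℕ :=
  sInf {k | ∃ l : List (Fin (n - 1)), wordProd l = w ∧ l.length = k}

/-- `l` is a reduced word for `w`. -/
def IsReducedWord {n : ℕ} (l : List (Fin (n - 1))) (w : Equiv.Perm (Fin n)) : Prop :=
  wordProd l = w ∧ l.length = len w

/-- The longest permutation `w₀` of `S_n`, sending `i ↦ n+1-i` (1-based). -/
def w0 (n : ℕ) : Equiv.Perm (Fin n) := Fin.revPerm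

/-- The Bruhat order: `w ≤ v` iff some reduced word for `v` contains a subword
that is a reduced word for `w`. -/
noncomputable def bruhatLE {n : ℕ} (w v : Equiv.Perm (Fin n)) : Prop :=
  ∃ l l' : List (Fin (n - 1)), IsReducedWord l v ∧ l'.Sublist l ∧ IsReducedWord l' w

/-- The lower of the two points moved by `s_{i+1}`. -/
def fLo {n : ℕ} (i : Fin (n - 1)) : Fin n := ⟨i.val, by have := i.isLt; omega⟩

/-- The upper of the two points moved by `s_{i+1}`. -/
def fHi {n : ℕ} (i : Fin (n - 1)) : Fin n := ⟨i.val + 1, by have := i.isLt; omega⟩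

/-- The multiplicative set of monomials in a multivariate polynomial ring over `ℤ`. -/
noncomputable def varMon (σ : Type) : Submonoid (MvPolynomial σ ℤ) :=
  Submonoid.closure (Set.range MvPolynomial.X)

/-- The ring of Laurent polynomials over `ℤ` in variables indexed by `σ`,
realized as the localization of `MvPolynomial σ ℤ` at the monomials. -/
abbrev LaurentMv (σ : Type) := Localization (varMon σ)

/-- The variable `X s` as a Laurent polynomial. -/
noncomputable def Xu {σ : Type} (s : σ) : LaurentMv σ :=
  algebraMap (MvPolynomial σ ℤ) (LaurentMv σ) (MvPolynomial.X s)

/-- The inverse `(X s)⁻¹` of a variable, as a Laurent polynomial. -/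
noncomputable def XuInv {σ : Type} (s : σ) : LaurentMv σ :=
  Localization.mk 1 ⟨MvPolynomial.X s, Submonoid.subset_closure ⟨s, rfl⟩⟩

theorem isUnit_Xu {σ : Type} (s : σ) : IsUnit (Xu s) :=
  IsLocalization.map_units (M := varMon σ) (LaurentMv σ)
    ⟨MvPolynomial.X s, Submonoid.subset_closure ⟨s, rfl⟩⟩

/-- Substitution of units for the variables, as a ring homomorphism on
Laurent polynomial rings. -/
noncomputable def substLaurent {σ τ : Type} (f : σ → LaurentMv τ)
    (hf : ∀ s, IsUnit (f s)) : LaurentMv σ →+* LaurentMv τ :=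
  IsLocalization.lift (M := varMon σ) (g := (MvPolynomial.aeval f).toRingHom)
    (by
      rintro ⟨y, hy⟩
      induction hy using Submonoid.closure_induction with
      | mem x hx =>
          obtain ⟨s, rfl⟩ := hx
          simpa using hf s
      | one => simp
      | mul x y _ _ hx hy => simpa [map_mul] using hx.mul hy)

/-- The abbreviation `R n` for the coefficient ring `ℤ[a_i^{±1}, b_i^{±1}]`:
`a`-variables indexed by `Sum.inl`, `b`-variables by `Sum.inr`. -/
abbrev Rng (n : ℕ) := LaurentMv (Fin n ⊕ Fin n)

/-- The defining relations of the degenerate Hecke algebra with `m` generators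
over the Laurent polynomial ring `R n`; generator `i : Fin m` stands for
`s_{i+1}` (1-based). -/
inductive HRelR (n m : ℕ) :
    FreeAlgebra (Rng n) (Fin m) → FreeAlgebra (Rng n) (Fin m) → Prop
  | comm (i j : Fin m) (h : (i : ℕ) + 2 ≤ j ∨ (j : ℕ) + 2 ≤ i) :
      HRelR n m (FreeAlgebra.ι _ i * FreeAlgebra.ι _ j)
        (FreeAlgebra.ι _ j * FreeAlgebra.ι _ i)
  | braid (i j : Fin m) (h : (j : ℕ) = i + 1) :
      HRelR n m (FreeAlgebra.ι _ i * FreeAlgebra.ι _ j * FreeAlgebra.ι _ i)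
        (FreeAlgebra.ι _ j * FreeAlgebra.ι _ i * FreeAlgebra.ι _ j)
  | sq (i : Fin m) :
      HRelR n m (FreeAlgebra.ι _ i * FreeAlgebra.ι _ i) (-(FreeAlgebra.ι _ i))

/-- The degenerate Hecke algebra `H_{m+1} ⊗ R n`, presented as the quotient of
the free `R n`-algebra on `m` generators by the Hecke relations.
`H_n ⊗ R` itself is `HA n (n-1)`. -/
abbrev HA (n m : ℕ) := RingQuot (HRelR n m)

noncomputable instance instHARing (n m : ℕ) : Ring (HA n m) := by
  with_unfolding_all exact RingQuot.instRing (R := FreeAlgebra (Rng n) (Fin m)) (HRelR n m)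

/-- The generator `s_i` of `HA n m` for a 1-based index `i : ℕ`; junk value `0`
out of range. -/
noncomputable def sgenA {n m : ℕ} (i : ℕ) : HA n m :=
  if h : 1 ≤ i ∧ i ≤ m then
    RingQuot.mkAlgHom (Rng n) (HRelR n m) (FreeAlgebra.ι _ (⟨i - 1, by omega⟩ : Fin m))
  else 0

/-- The Yang-Baxter element `h_i(c) = 1 + (1-c) s_i` of `HA n m` (1-based `i`). -/
noncomputable def hh {n m : ℕ} (i : ℕ) (c : Rng n) : HA n m :=
  1 + algebraMap (Rng n) (HA n m) (1 - c) * sgenA i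

/-- `A_p^q(c;k) = h_{k-1+p}(d_p/c) h_{k-2+p}(d_{p-1}/c) ⋯ h_{k-1+q}(d_q/c)`,
where `d : ℕ → Rng n` is the (1-based) list of `b`-variables used and `c` is a
unit; for `p = q - 1` this is `1`. -/
noncomputable def AA {n m : ℕ} (p q : ℕ) (c : (Rng n)ˣ) (k : ℕ)
    (d : ℕ → Rng n) : HA n m :=
  (((List.range' q (p + 1 - q)).reverse).map fun r =>
    hh (k - 1 + r) (d r * ((c⁻¹ : (Rng n)ˣ) : Rng n))).prod

/-- The `b`-variable `b_r` (1-based) of `Rng n`, as a unit; junk value `1` out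
of range. -/
noncomputable def bu (n : ℕ) (r : ℕ) : (Rng n)ˣ :=
  if h : 1 ≤ r ∧ r ≤ n then (isUnit_Xu (Sum.inr (⟨r - 1, by omega⟩ : Fin n))).unit else 1

/-- The `a`-variable `a_r` (1-based) of `Rng n`, as a unit; junk value `1` out
of range. -/
noncomputable def au (n : ℕ) (r : ℕ) : (Rng n)ˣ :=
  if h : 1 ≤ r ∧ r ≤ n then (isUnit_Xu (Sum.inl (⟨r - 1, by omega⟩ : Fin n))).unit else 1

/-- Fomin-Kirillov's element `𝔊^{(m)}(c;d) = A_{m-1}^1(c_1;1) ⋯ A_1^1(c_{m-1};m-1)`,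
for 1-based variable lists `c` (units) and `d`, formed in `HA n (m-1)`. -/
noncomputable def Gfk {n : ℕ} (m : ℕ) (c : ℕ → (Rng n)ˣ) (d : ℕ → Rng n) :
    HA n (m - 1) :=
  ((List.range' 1 (m - 1)).map fun k => AA (m - k) 1 (c k) k d).prod

/-- The list of `b`-variables of `Rng n` (1-based). -/
noncomputable def bval (n : ℕ) : ℕ → Rng n := fun r => ((bu n r : (Rng n)ˣ) : Rng n)

section YBHelpers

variable {R A : Type*} [CommRing R] [Ring A] [Algebra R A]

lemma yb_mul_aux (s : A) (hs : s * s = -s) (c d : R) :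
    (1 + algebraMap R A (1 - c) * s) * (1 + algebraMap R A (1 - d) * s)
      = 1 + algebraMap R A (1 - c * d) * s := by
  simp only [← Algebra.smul_def, mul_add, add_mul, one_mul, mul_one, mul_assoc,
    smul_mul_assoc, mul_smul_comm, smul_smul, hs, smul_neg]
  module

lemma yb_comm_aux (s t : A) (h : s * t = t * s) (c d : R) :
    (1 + algebraMap R A (1 - c) * s) * (1 + algebraMap R A (1 - d) * t)
      = (1 + algebraMap R A (1 - d) * t) * (1 + algebraMap R A (1 - c) * s) := by
  simp only [← Algebra.smul_def, mul_add, add_mul, one_mul, mul_one, mul_assoc,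
    smul_mul_assoc, mul_smul_comm, smul_smul, h]
  module

lemma yb_braid_aux (s t : A) (hs : s * s = -s) (ht : t * t = -t)
    (hb : s * (t * s) = t * (s * t)) (c d : R) :
    (1 + algebraMap R A (1 - c) * s) * (1 + algebraMap R A (1 - c * d) * t) *
        (1 + algebraMap R A (1 - d) * s)
      = (1 + algebraMap R A (1 - d) * t) * (1 + algebraMap R A (1 - c * d) * s) *
        (1 + algebraMap R A (1 - c) * t) := by
  simp only [← Algebra.smul_def, mul_add, add_mul, one_mul, mul_one, mul_assoc,
    smul_mul_assoc, mul_smul_comm, smul_smul, hs, ht, smul_neg, hb]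
  module

end YBHelpers

section HeckeHelpers

variable {n m : ℕ}

lemma sgen_sq {i : ℕ} (h1 : 1 ≤ i) (h2 : i ≤ m) :
    (sgenA i : HA n m) * sgenA i = -sgenA i := by
  rw [sgenA, dif_pos ⟨h1, h2⟩, ← map_mul, ← map_neg]
  exact RingQuot.mkAlgHom_rel _ (HRelR.sq _)

lemma sgen_comm {i j : ℕ} (h1 : 1 ≤ i) (h2 : i ≤ m) (h3 : 1 ≤ j) (h4 : j ≤ m)
    (h : i + 2 ≤ j ∨ j + 2 ≤ i) :
    (sgenA i : HA n m) * sgenA j = sgenA j * sgenA i := by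
  rw [sgenA, sgenA, dif_pos ⟨h1, h2⟩, dif_pos ⟨h3, h4⟩, ← map_mul, ← map_mul]
  exact RingQuot.mkAlgHom_rel _ (HRelR.comm _ _ (by simp only [Fin.val_mk]; omega))

lemma sgen_braid {i : ℕ} (h1 : 1 ≤ i) (h2 : i + 1 ≤ m) :
    (sgenA i : HA n m) * sgenA (i + 1) * sgenA i
      = sgenA (i + 1) * sgenA i * sgenA (i + 1) := by
  rw [sgenA, sgenA, dif_pos ⟨h1, by omega⟩, dif_pos ⟨by omega, h2⟩,
    ← map_mul, ← map_mul, ← map_mul, ← map_mul]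
  exact RingQuot.mkAlgHom_rel _ (HRelR.braid _ _ (by simp only [Fin.val_mk]; omega))

end HeckeHelpers

set_option maxHeartbeats 8000000

/-- **The Yang-Baxter identities** (Fomin-Kirillov) in `H_n ⊗ R` for the
elements `h_i(c) = 1 + (1-c) s_i`. -/
theorem yang_baxter (n : ℕ) (hn : 1 ≤ n) (c d : Rng n) :
    (∀ i j : ℕ, 1 ≤ i → i ≤ n - 1 → 1 ≤ j → j ≤ n - 1 → (i + 2 ≤ j ∨ j + 2 ≤ i) →
        (hh i c : HA n (n - 1)) * hh j d = hh j d * hh i c) ∧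
    (∀ i : ℕ, 1 ≤ i → i ≤ n - 1 →
        (hh i c : HA n (n - 1)) * hh i d = hh i (c * d)) ∧
    (∀ i : ℕ, 1 ≤ i → i + 1 ≤ n - 1 →
        (hh i c : HA n (n - 1)) * hh (i + 1) (c * d) * hh i d =
          hh (i + 1) d * hh i (c * d) * hh (i + 1) c) := by
  refine ⟨?_, ?_, ?_⟩
  · intro i j hi1 hi2 hj1 hj2 h
    unfold hh
    exact yb_comm_aux _ _ (sgen_comm hi1 hi2 hj1 hj2 h) c d
  · intro i hi1 hi2
    unfold hh
    exact yb_mul_aux _ (sgen_sq hi1 hi2) c d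
  · intro i hi1 hi2
    unfold hh
    exact yb_braid_aux _ _ (sgen_sq hi1 (by omega)) (sgen_sq (by omega) hi2)
      (by rw [← mul_assoc, ← mul_assoc, sgen_braid hi1 hi2, mul_assoc]) c d
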